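/- GPA guarantee when the hub is exhausted: fix τ ∈ (0,1] and a threshold vector γ_1,…,γ_n with γ_i ∈ [0,1] and γ_i ≤ min{1, τ·p·c_i/w_i} for all i (the minimum interpreted as 1 when w_i = 0). Let ℓ be the allocation produced by the GPA policy and suppose s^end = s − Σ_i L_i = 0. Then for every feasible offline allocation ℓ* (nonnegative, with Σ_i Σ_t ℓ*_i^t ≤ s), cost(ℓ) ≤ (1 + τ)·cost(ℓ*) + Σ_{i=1}^n 3p·(b_i + c_i). -/

import Mathlib

open Finset

/-- `stock b d ℓ t` is the post-replenishment stock `k^{t+1}` at a single site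
(with `stock b d ℓ 0 = k^1 = b`), under demands `d` and allocations `ℓ`. -/
noncomputable def stock (b : ℕ) (d : ℕ → ℕ) (ℓ : ℕ → ℝ) : ℕ → ℝ
  | 0 => (b : ℝ)
  | t + 1 => max (stock b d ℓ t - (d (t + 1) : ℝ)) 0 + ℓ (t + 1)

/-- Sitewise transport cost `Σ_{t=1}^T w_i ⌈ℓ_i^t / c_i⌉`. -/
noncomputable def transportCost (T : ℕ) (wi : ℝ) (ci : ℕ) (ℓ : ℕ → ℝ) : ℝ :=
  ∑ t ∈ Icc 1 T, wi * (⌈ℓ t / (ci : ℝ)⌉ : ℝ)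

/-- Sitewise lost-sales penalty `Σ_{t=1}^T p (d_i^t − k_i^t)_+`. -/
noncomputable def penaltyCost (T : ℕ) (p : ℝ) (b : ℕ) (d : ℕ → ℕ) (ℓ : ℕ → ℝ) : ℝ :=
  ∑ t ∈ Icc 1 T, p * max ((d t : ℝ) - stock b d ℓ (t - 1)) 0

/-- Total cost of an allocation. -/
noncomputable def totalCost {n : ℕ} (T : ℕ) (w : Fin n → ℝ) (c b : Fin n → ℕ)
    (p : ℝ) (d : Fin n → ℕ → ℕ) (ℓ : Fin n → ℕ → ℝ) : ℝ :=
  ∑ i, (transportCost T (w i) (c i) (ℓ i) + penaltyCost T p (b i) (d i) (ℓ i))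

/-- One time step of GPA: eligible sites are processed in index order; site `i` is
eligible if `r i < b i` and `Lprev i ≤ γ i * Dt i`; an eligible site requests
`⌈(b i − r i)/c i⌉` full shipments and receives the min of that and the remaining
hub supply. Returns the remaining supply and the per-site allocation. -/
noncomputable def gpaInner {n : ℕ} (b c : Fin n → ℕ) (γ : Fin n → ℝ)
    (Dt Lprev r : Fin n → ℕ) (rem : ℕ) : ℕ × (Fin n → ℕ) :=
  (List.finRange n).foldl
    (fun (st : ℕ × (Fin n → ℕ)) (i : Fin n) =>
      if r i < b i ∧ (Lprev i : ℝ) ≤ γ i * (Dt i : ℝ) then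
        let q : ℕ := (b i - r i + c i - 1) / c i
        let give : ℕ := min st.1 (c i * q)
        (st.1 - give, Function.update st.2 i give)
      else st)
    (rem, fun _ => 0)

/-- GPA state after `t` time steps: (remaining hub supply, current stocks `k^{t+1}`,
cumulative allocations `L^t`). Initially `(s, b, 0)`. -/
noncomputable def gpaState {n : ℕ} (b c : Fin n → ℕ) (γ : Fin n → ℝ)
    (d : Fin n → ℕ → ℕ) (s : ℕ) : ℕ → ℕ × (Fin n → ℕ) × (Fin n → ℕ)
  | 0 => (s, b, fun _ => 0)
  | t + 1 =>
    let st := gpaState b c γ d s t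
    let r : Fin n → ℕ := fun i => st.2.1 i - d i (t + 1)
    let Dt : Fin n → ℕ := fun i => ∑ u ∈ Icc 1 (t + 1), d i u
    let res := gpaInner b c γ Dt st.2.2 r st.1
    (res.1, fun i => r i + res.2 i, fun i => st.2.2 i + res.2 i)

/-- Cumulative GPA allocation `L_i^t`. -/
noncomputable def gpaL {n : ℕ} (b c : Fin n → ℕ) (γ : Fin n → ℝ)
    (d : Fin n → ℕ → ℕ) (s : ℕ) (i : Fin n) (t : ℕ) : ℕ :=
  (gpaState b c γ d s t).2.2 i

/-- Per-step GPA allocation `ℓ_i^t` (as a real number). -/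
noncomputable def gpaAlloc {n : ℕ} (b c : Fin n → ℕ) (γ : Fin n → ℝ)
    (d : Fin n → ℕ → ℕ) (s : ℕ) (i : Fin n) (t : ℕ) : ℝ :=
  ((gpaL b c γ d s i t - gpaL b c γ d s i (t - 1) : ℕ) : ℝ)
section FoldLemmas

variable {n : ℕ} (b c : Fin n → ℕ) (γ : Fin n → ℝ) (Dt Lprev r : Fin n → ℕ)

/-- The single-site processing step of `gpaInner`. -/
noncomputable def gstep : (ℕ × (Fin n → ℕ)) → Fin n → (ℕ × (Fin n → ℕ)) :=
  fun (st : ℕ × (Fin n → ℕ)) (i : Fin n) =>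
      if r i < b i ∧ (Lprev i : ℝ) ≤ γ i * (Dt i : ℝ) then
        let q : ℕ := (b i - r i + c i - 1) / c i
        let give : ℕ := min st.1 (c i * q)
        (st.1 - give, Function.update st.2 i give)
      else st

lemma gpaInner_eq (rem : ℕ) :
    gpaInner b c γ Dt Lprev r rem
      = (List.finRange n).foldl (gstep b c γ Dt Lprev r) (rem, fun _ => 0) := rfl

lemma foldl_fst_le (l : List (Fin n)) (st : ℕ × (Fin n → ℕ)) :
    (l.foldl (gstep b c γ Dt Lprev r) st).1 ≤ st.1 := by
  induction l generalizing st with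
  | nil => exact le_refl _
  | cons a l ih =>
    refine le_trans (ih _) ?_
    unfold gstep
    split
    · exact Nat.sub_le _ _
    · exact le_refl _

lemma foldl_zero (l : List (Fin n)) (st : ℕ × (Fin n → ℕ))
    (h1 : st.1 = 0) (h2 : ∀ i, st.2 i = 0) :
    (l.foldl (gstep b c γ Dt Lprev r) st).1 = 0
      ∧ ∀ i, (l.foldl (gstep b c γ Dt Lprev r) st).2 i = 0 := by
  induction l generalizing st with
  | nil => exact ⟨h1, h2⟩
  | cons a l ih =>
    refine ih _ ?_ ?_
    · unfold gstep; split
      · simp [h1]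
      · exact h1
    · unfold gstep; split
      · intro i
        simp only [h1]
        rcases eq_or_ne i a with rfl | hne
        · simp
        · simpa [Function.update_of_ne hne] using h2 i
      · exact h2

lemma foldl_dvd (l : List (Fin n)) (st : ℕ × (Fin n → ℕ))
    (h : st.1 = 0 ∨ ∀ i, c i ∣ st.2 i) :
    (l.foldl (gstep b c γ Dt Lprev r) st).1 = 0
      ∨ ∀ i, c i ∣ (l.foldl (gstep b c γ Dt Lprev r) st).2 i := by
  induction l generalizing st with
  | nil => exact h
  | cons a l ih =>
    refine ih _ ?_
    unfold gstep
    split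
    · rcases h with h1 | h2
      · left; simp [h1]
      · rcases le_or_gt (c a * ((b a - r a + c a - 1) / c a)) st.1 with hle | hlt
        · right
          intro i
          rcases eq_or_ne i a with rfl | hne
          · simpa [min_eq_right hle] using Dvd.intro _ rfl
        
          · simpa [Function.update_of_ne hne] using h2 i
        · left
          simp [min_eq_left hlt.le]
    · exact h

lemma foldl_give (l : List (Fin n)) (st : ℕ × (Fin n → ℕ))
    (h : ∀ i, st.2 i ≠ 0 →
      (r i < b i ∧ (Lprev i : ℝ) ≤ γ i * (Dt i : ℝ)
        ∧ st.2 i ≤ c i * ((b i - r i + c i - 1) / c i))) :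
    ∀ i, (l.foldl (gstep b c γ Dt Lprev r) st).2 i ≠ 0 →
      (r i < b i ∧ (Lprev i : ℝ) ≤ γ i * (Dt i : ℝ)
        ∧ (l.foldl (gstep b c γ Dt Lprev r) st).2 i ≤ c i * ((b i - r i + c i - 1) / c i)) := by
  induction l generalizing st with
  | nil => exact h
  | cons a l ih =>
    refine ih _ ?_
    unfold gstep
    split
    · rename_i hcond
      intro i hi
      rcases eq_or_ne i a with rfl | hne
      · refine ⟨hcond.1, hcond.2, ?_⟩
        simpa using min_le_right _ _
      · simp only [Function.update_of_ne hne] at hi ⊢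
        exact h i hi
    · exact h

lemma gpaInner_fst_le (rem : ℕ) : (gpaInner b c γ Dt Lprev r rem).1 ≤ rem := by
  rw [gpaInner_eq]; exact foldl_fst_le _ _ _ _ _ _ _ _

lemma gpaInner_zero (hrem : (0:ℕ) = 0) :
    (gpaInner b c γ Dt Lprev r 0).1 = 0 ∧ ∀ i, (gpaInner b c γ Dt Lprev r 0).2 i = 0 := by
  rw [gpaInner_eq]; exact foldl_zero _ _ _ _ _ _ _ _ rfl (fun _ => rfl)

lemma gpaInner_dvd (rem : ℕ) (h : (gpaInner b c γ Dt Lprev r rem).1 ≠ 0) :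
    ∀ i, c i ∣ (gpaInner b c γ Dt Lprev r rem).2 i := by
  have := foldl_dvd b c γ Dt Lprev r (List.finRange n) (rem, fun _ => 0) (Or.inr (fun i => dvd_zero _))
  rw [gpaInner_eq] at h ⊢
  tauto

lemma gpaInner_give (rem : ℕ) :
    ∀ i, (gpaInner b c γ Dt Lprev r rem).2 i ≠ 0 →
      (r i < b i ∧ (Lprev i : ℝ) ≤ γ i * (Dt i : ℝ)
        ∧ (gpaInner b c γ Dt Lprev r rem).2 i ≤ c i * ((b i - r i + c i - 1) / c i)) := by
  rw [gpaInner_eq]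
  exact foldl_give _ _ _ _ _ _ _ _ (fun i hi => absurd rfl hi)

end FoldLemmas
section TimeLemmas

variable {n : ℕ} (b c : Fin n → ℕ) (γ : Fin n → ℝ) (d : Fin n → ℕ → ℕ) (s : ℕ)

/-- The per-step allocation vector at time `t+1`. -/
noncomputable def gres (t : ℕ) : ℕ × (Fin n → ℕ) :=
  gpaInner b c γ (fun i => ∑ u ∈ Icc 1 (t + 1), d i u)
    (gpaState b c γ d s t).2.2
    (fun i => (gpaState b c γ d s t).2.1 i - d i (t + 1))
    (gpaState b c γ d s t).1

lemma gpaState_succ (t : ℕ) :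
    gpaState b c γ d s (t + 1)
      = ((gres b c γ d s t).1,
         fun i => ((gpaState b c γ d s t).2.1 i - d i (t + 1)) + (gres b c γ d s t).2 i,
         fun i => (gpaState b c γ d s t).2.2 i + (gres b c γ d s t).2 i) := rfl

lemma gpaL_succ (i : Fin n) (t : ℕ) :
    gpaL b c γ d s i (t + 1) = gpaL b c γ d s i t + (gres b c γ d s t).2 i := rfl

lemma gpaAlloc_succ (i : Fin n) (t : ℕ) :
    gpaAlloc b c γ d s i (t + 1) = ((gres b c γ d s t).2 i : ℝ) := by
  unfold gpaAlloc
  rw [Nat.add_sub_cancel, gpaL_succ, Nat.add_sub_cancel_left]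
lemma cast_sub_max (k m : ℕ) : ((k - m : ℕ) : ℝ) = max ((k : ℝ) - m) 0 := by
  rcases le_total m k with h | h
  · rw [Nat.cast_sub h, max_eq_left]
    simpa using (Nat.cast_le (α := ℝ)).2 h
  · rw [Nat.sub_eq_zero_of_le h, max_eq_right]
    · simp
    · simpa using (Nat.cast_le (α := ℝ)).2 h

lemma gpa_stock_eq (i : Fin n) : ∀ t : ℕ,
    stock (b i) (d i) (gpaAlloc b c γ d s i) t = ((gpaState b c γ d s t).2.1 i : ℝ)
  | 0 => rfl
  | (t + 1) => by
    rw [stock, gpa_stock_eq i t, gpaAlloc_succ, gpaState_succ]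
    push_cast
    rw [cast_sub_max]

lemma gpa_S_antitone : Antitone (fun t => (gpaState b c γ d s t).1) := by
  apply antitone_nat_of_succ_le
  intro t
  exact gpaInner_fst_le _ _ _ _ _ _ _

lemma gpa_give_zero (t : ℕ) (h : (gpaState b c γ d s t).1 = 0) :
    (gres b c γ d s t).1 = 0 ∧ ∀ i, (gres b c γ d s t).2 i = 0 := by
  unfold gres
  rw [h]
  exact gpaInner_zero _ _ _ _ _ _ rfl

lemma gres_give (t : ℕ) (i : Fin n) (h : (gres b c γ d s t).2 i ≠ 0) :
    ((gpaState b c γ d s t).2.1 i - d i (t+1)) < b i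
    ∧ ((gpaState b c γ d s t).2.2 i : ℝ) ≤ γ i * ((∑ u ∈ Icc 1 (t+1), d i u : ℕ) : ℝ)
    ∧ (gres b c γ d s t).2 i
        ≤ c i * ((b i - ((gpaState b c γ d s t).2.1 i - d i (t+1)) + c i - 1) / c i) :=
  gpaInner_give b c γ _ _ _ _ i h

lemma gres_dvd (t : ℕ) (h : (gres b c γ d s t).1 ≠ 0) (i : Fin n) :
    c i ∣ (gres b c γ d s t).2 i :=
  gpaInner_dvd b c γ _ _ _ _ h i

lemma gpa_stock_le (i : Fin n) (hc : 1 ≤ c i) : ∀ t : ℕ,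
    (gpaState b c γ d s t).2.1 i ≤ b i + c i - 1
  | 0 => by
    show b i ≤ b i + c i - 1
    omega
  | (t + 1) => by
    have prev := gpa_stock_le i hc t
    rw [gpaState_succ]
    rcases eq_or_ne ((gres b c γ d s t).2 i) 0 with h0 | h0
    · simp only [h0, add_zero]
      omega
    · obtain ⟨hrb, _, hle⟩ := gres_give b c γ d s t i h0
      have hq : c i * ((b i - ((gpaState b c γ d s t).2.1 i - d i (t+1)) + c i - 1) / c i)
          ≤ b i - ((gpaState b c γ d s t).2.1 i - d i (t+1)) + c i - 1 :=
        Nat.mul_div_le _ _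
      simp only []
      omega

lemma gpa_L_le (i : Fin n) (hγ0 : 0 ≤ γ i) (hc : 1 ≤ c i) : ∀ t : ℕ,
    (gpaL b c γ d s i t : ℝ) ≤ γ i * (∑ u ∈ Icc 1 t, (d i u : ℝ)) + b i + c i
  | 0 => by
    simp [gpaL, gpaState]
    positivity
  | (t + 1) => by
    have prev := gpa_L_le i hγ0 hc t
    rw [gpaL_succ]
    rcases eq_or_ne ((gres b c γ d s t).2 i) 0 with h0 | h0
    · rw [h0, add_zero]
      refine prev.trans ?_
      have : (∑ u ∈ Icc 1 t, (d i u : ℝ)) ≤ ∑ u ∈ Icc 1 (t+1), (d i u : ℝ) := by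
        apply Finset.sum_le_sum_of_subset_of_nonneg
        · exact Finset.Icc_subset_Icc_right (Nat.le_succ _)
        · intros; positivity
      have := mul_le_mul_of_nonneg_left this hγ0
      linarith
    · obtain ⟨hrb, helig, hle⟩ := gres_give b c γ d s t i h0
      have hq : c i * ((b i - ((gpaState b c γ d s t).2.1 i - d i (t+1)) + c i - 1) / c i)
          ≤ b i - ((gpaState b c γ d s t).2.1 i - d i (t+1)) + c i - 1 :=
        Nat.mul_div_le _ _
      have hgive : (gres b c γ d s t).2 i ≤ b i + c i - 1 := by
        refine hle.trans (hq.trans ?_)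
        omega
      have hgive' : ((gres b c γ d s t).2 i : ℝ) ≤ (b i : ℝ) + c i := by
        have : ((gres b c γ d s t).2 i : ℝ) ≤ ((b i + c i - 1 : ℕ) : ℝ) := by
          exact_mod_cast hgive
        refine this.trans ?_
        have : ((b i + c i - 1 : ℕ) : ℝ) ≤ ((b i + c i : ℕ) : ℝ) := by
          exact_mod_cast Nat.sub_le _ _
        push_cast at this ⊢
        linarith
      have helig' : ((gpaL b c γ d s i t : ℝ)) ≤ γ i * (∑ u ∈ Icc 1 (t+1), (d i u : ℝ)) := by
        have := helig
        push_cast at this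
        exact this
      push_cast
      linarith

lemma gpa_alloc_telescope (i : Fin n) (T : ℕ) :
    ∑ t ∈ Icc 1 T, gpaAlloc b c γ d s i t = (gpaL b c γ d s i T : ℝ) := by
  rw [← Finset.Ico_add_one_right_eq_Icc, Finset.sum_Ico_eq_sum_range]
  have : ∀ u, gpaAlloc b c γ d s i (1 + u)
      = (gpaL b c γ d s i (u+1) : ℝ) - (gpaL b c γ d s i u : ℝ) := by
    intro u
    rw [add_comm, gpaAlloc_succ, gpaL_succ]
    push_cast
    ring
  rw [Finset.sum_congr rfl (fun u _ => this u), Finset.sum_range_sub (fun u => (gpaL b c γ d s i u : ℝ))]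
  rw [show gpaL b c γ d s i 0 = 0 from rfl]
  simp
end TimeLemmas
section CostLemmas

lemma max_sub_identity (x y : ℝ) : max (x - y) 0 = x - y + max (y - x) 0 := by
  rcases le_total x y with h | h
  · rw [max_eq_right (by linarith), max_eq_left (by linarith)]
    ring
  · rw [max_eq_left (by linarith), max_eq_right (by linarith)]
    ring

lemma penalty_eq (T : ℕ) (p : ℝ) (b : ℕ) (d : ℕ → ℕ) (ℓ : ℕ → ℝ) :
    penaltyCost T p b d ℓ
      = p * ((∑ t ∈ Icc 1 T, (d t : ℝ)) - b + stock b d ℓ T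
              - ∑ t ∈ Icc 1 T, ℓ t) := by
  unfold penaltyCost
  rw [← Finset.mul_sum]
  congr 1
  have hterm : ∀ u : ℕ, max ((d (u+1) : ℝ) - stock b d ℓ ((u+1) - 1)) 0
      = ((d (u+1) : ℝ) - ℓ (u+1)) + (stock b d ℓ (u+1) - stock b d ℓ u) := by
    intro u
    have hs : stock b d ℓ (u+1) = max (stock b d ℓ u - (d (u+1):ℝ)) 0 + ℓ (u+1) := rfl
    rw [Nat.add_sub_cancel, max_sub_identity, hs]
    ring
  have reidx : ∀ f : ℕ → ℝ, ∑ t ∈ Icc 1 T, f t = ∑ u ∈ range T, f (u + 1) := by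
    intro f
    rw [← Finset.Ico_add_one_right_eq_Icc, Finset.sum_Ico_eq_sum_range]
    exact Finset.sum_congr rfl (fun u _ => by rw [add_comm])
  rw [reidx (fun t => max ((d t : ℝ) - stock b d ℓ (t - 1)) 0),
      reidx (fun t => (d t : ℝ)), reidx (fun t => ℓ t)]
  rw [Finset.sum_congr rfl (fun u _ => hterm u), Finset.sum_add_distrib,
      Finset.sum_range_sub (fun u => stock b d ℓ u), Finset.sum_sub_distrib]
  rw [show stock b d ℓ 0 = (b : ℝ) from rfl]
  ring

lemma stock_nonneg (T : ℕ) (b : ℕ) (d : ℕ → ℕ) (ℓ : ℕ → ℝ)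
    (hℓ : ∀ t ∈ Icc 1 T, 0 ≤ ℓ t) : ∀ t, t ≤ T → 0 ≤ stock b d ℓ t
  | 0, _ => by
    rw [show stock b d ℓ 0 = (b:ℝ) from rfl]
    positivity
  | (t+1), h => by
    rw [show stock b d ℓ (t+1) = max (stock b d ℓ t - (d (t+1):ℝ)) 0 + ℓ (t+1) from rfl]
    have h1 : 0 ≤ ℓ (t+1) := hℓ _ (by simp; omega)
    have h2 : (0:ℝ) ≤ max (stock b d ℓ t - (d (t+1):ℝ)) 0 := le_max_right _ _
    linarith

lemma transport_ge (T : ℕ) (w : ℝ) (hw : 0 ≤ w) (c : ℕ) (ℓ : ℕ → ℝ) :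
    (w / c) * ∑ t ∈ Icc 1 T, ℓ t ≤ transportCost T w c ℓ := by
  unfold transportCost
  rw [Finset.mul_sum]
  refine Finset.sum_le_sum (fun t _ => ?_)
  have h1 : ℓ t / (c:ℝ) ≤ (⌈ℓ t / (c:ℝ)⌉ : ℝ) := Int.le_ceil _
  have := mul_le_mul_of_nonneg_left h1 hw
  calc w / c * ℓ t = w * (ℓ t / c) := by ring
  _ ≤ w * (⌈ℓ t / (c:ℝ)⌉ : ℝ) := this

lemma transport_nonneg (T : ℕ) (w : ℝ) (hw : 0 ≤ w) (c : ℕ) (ℓ : ℕ → ℝ)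
    (hℓ : ∀ t ∈ Icc 1 T, 0 ≤ ℓ t) : 0 ≤ transportCost T w c ℓ := by
  unfold transportCost
  refine Finset.sum_nonneg (fun t ht => ?_)
  have h0 : 0 ≤ ℓ t / (c:ℝ) := div_nonneg (hℓ t ht) (Nat.cast_nonneg c)
  have h1 : (0:ℝ) ≤ (⌈ℓ t / (c:ℝ)⌉ : ℝ) := le_trans h0 (Int.le_ceil _)
  positivity

lemma penalty_nonneg (T : ℕ) (p : ℝ) (hp : 0 ≤ p) (b : ℕ) (d : ℕ → ℕ) (ℓ : ℕ → ℝ) :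
    0 ≤ penaltyCost T p b d ℓ := by
  unfold penaltyCost
  refine Finset.sum_nonneg (fun t _ => ?_)
  exact mul_nonneg hp (le_max_right _ _)

end CostLemmas
lemma sum_Icc_one (T : ℕ) (f : ℕ → ℝ) :
    ∑ t ∈ Icc 1 T, f t = ∑ u ∈ range T, f (u + 1) := by
  rw [← Finset.Ico_add_one_right_eq_Icc, Finset.sum_Ico_eq_sum_range]
  exact Finset.sum_congr rfl (fun u _ => by rw [add_comm])

section Transport

variable {n : ℕ} (b c : Fin n → ℕ) (γ : Fin n → ℝ) (d : Fin n → ℕ → ℕ) (s : ℕ)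
  (w : Fin n → ℝ) (p : ℝ)

lemma gpa_transport_step (hc : ∀ i, 1 ≤ c i) (hw : ∀ i, 0 ≤ w i)
    (hwp : ∀ i, w i ≤ p * c i) (u : ℕ) :
    ∑ i, w i * (⌈gpaAlloc b c γ d s i (u+1) / (c i : ℝ)⌉ : ℝ)
      ≤ ∑ i, (w i / c i) * gpaAlloc b c γ d s i (u+1)
        + (if (gpaState b c γ d s (u+1)).1 = 0 ∧ (gpaState b c γ d s u).1 ≠ 0
           then ∑ i, p * c i else 0) := by
  rcases eq_or_ne ((gpaState b c γ d s (u+1)).1) 0 with h1 | h1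
  · rcases eq_or_ne ((gpaState b c γ d s u).1) 0 with h2 | h2
    · -- everything is zero
      rw [if_neg (by tauto)]
      have hz : ∀ i, gpaAlloc b c γ d s i (u+1) = 0 := by
        intro i
        rw [gpaAlloc_succ, (gpa_give_zero b c γ d s u h2).2 i]
        simp
      refine le_of_eq ?_
      rw [add_zero]
      refine Finset.sum_congr rfl (fun i _ => ?_)
      rw [hz i]
      simp
    · -- the single bad step
      rw [if_pos ⟨h1, h2⟩, ← Finset.sum_add_distrib]
      refine Finset.sum_le_sum (fun i _ => ?_)
      have hceil : (⌈gpaAlloc b c γ d s i (u+1) / (c i : ℝ)⌉ : ℝ)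
          ≤ gpaAlloc b c γ d s i (u+1) / (c i : ℝ) + 1 :=
        (Int.ceil_lt_add_one _).le
      have hcpos : (0:ℝ) < c i := by
        exact_mod_cast Nat.lt_of_lt_of_le Nat.zero_lt_one (hc i)
      have := mul_le_mul_of_nonneg_left hceil (hw i)
      have heq : w i * (gpaAlloc b c γ d s i (u+1) / (c i : ℝ) + 1)
          = (w i / c i) * gpaAlloc b c γ d s i (u+1) + w i := by
        field_simp
      nlinarith [hwp i]
  · -- supply remains: all allocations are full shipments
    rw [if_neg (by tauto), add_zero]
    refine le_of_eq (Finset.sum_congr rfl (fun i _ => ?_))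
    have hd : c i ∣ (gres b c γ d s u).2 i := gres_dvd b c γ d s u h1 i
    obtain ⟨k, hk⟩ := hd
    have hcpos : (0:ℝ) < c i := by
      exact_mod_cast Nat.lt_of_lt_of_le Nat.zero_lt_one (hc i)
    rw [gpaAlloc_succ, hk]
    push_cast
    rw [mul_comm (c i : ℝ) (k : ℝ), mul_div_assoc, div_self (ne_of_gt hcpos)]
    rw [mul_one, Int.ceil_natCast]
    field_simp
    norm_cast

lemma gpa_transport_total (hc : ∀ i, 1 ≤ c i) (hw : ∀ i, 0 ≤ w i) (hp : 0 ≤ p)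
    (hwp : ∀ i, w i ≤ p * c i) (T : ℕ) :
    ∑ i, transportCost T (w i) (c i) (gpaAlloc b c γ d s i)
      ≤ ∑ i, (w i / c i) * (gpaL b c γ d s i T : ℝ) + ∑ i, p * c i := by
  have hPnn : (0:ℝ) ≤ ∑ i, p * c i :=
    Finset.sum_nonneg (fun i _ => mul_nonneg hp (Nat.cast_nonneg _))
  have step1 : ∑ i, transportCost T (w i) (c i) (gpaAlloc b c γ d s i)
      = ∑ u ∈ range T, ∑ i, w i * (⌈gpaAlloc b c γ d s i (u+1) / (c i : ℝ)⌉ : ℝ) := by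
    unfold transportCost
    rw [Finset.sum_comm]
    rw [sum_Icc_one T (fun t => ∑ i, w i * (⌈gpaAlloc b c γ d s i t / (c i : ℝ)⌉ : ℝ))]
  rw [step1]
  have step2 : ∑ u ∈ range T, ∑ i, w i * (⌈gpaAlloc b c γ d s i (u+1) / (c i : ℝ)⌉ : ℝ)
      ≤ ∑ u ∈ range T, (∑ i, (w i / c i) * gpaAlloc b c γ d s i (u+1)
          + (if (gpaState b c γ d s (u+1)).1 = 0 ∧ (gpaState b c γ d s u).1 ≠ 0
             then ∑ i, p * c i else 0)) :=
    Finset.sum_le_sum (fun u _ => gpa_transport_step b c γ d s w p hc hw hwp u)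
  refine step2.trans ?_
  rw [Finset.sum_add_distrib]
  have step3 : ∑ u ∈ range T, ∑ i, (w i / c i) * gpaAlloc b c γ d s i (u+1)
      = ∑ i, (w i / c i) * (gpaL b c γ d s i T : ℝ) := by
    rw [Finset.sum_comm]
    refine Finset.sum_congr rfl (fun i _ => ?_)
    rw [← Finset.mul_sum, ← sum_Icc_one T (fun t => gpaAlloc b c γ d s i t),
      gpa_alloc_telescope]
  have step4 : ∑ u ∈ range T,
      (if (gpaState b c γ d s (u+1)).1 = 0 ∧ (gpaState b c γ d s u).1 ≠ 0
       then ∑ i, p * c i else 0) ≤ ∑ i, p * c i := by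
    rw [← Finset.sum_filter]
    rw [Finset.sum_const]
    have hcard : (Finset.filter
        (fun u => (gpaState b c γ d s (u+1)).1 = 0 ∧ (gpaState b c γ d s u).1 ≠ 0)
        (range T)).card ≤ 1 := by
      refine Finset.card_le_one.2 (fun u hu v hv => ?_)
      simp only [Finset.mem_filter] at hu hv
      by_contra hne
      rcases Nat.lt_or_ge u v with hlt | hge
      · exact hv.2.2 (Nat.le_antisymm
          (le_trans (gpa_S_antitone b c γ d s (Nat.succ_le_of_lt hlt)) (le_of_eq hu.2.1))
          (Nat.zero_le _))
      · have hlt : v < u := lt_of_le_of_ne hge (fun h => hne (h ▸ rfl))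
        exact hu.2.2 (Nat.le_antisymm
          (le_trans (gpa_S_antitone b c γ d s (Nat.succ_le_of_lt hlt)) (le_of_eq hv.2.1))
          (Nat.zero_le _))
    calc (Finset.filter _ (range T)).card • (∑ i, p * c i)
        ≤ 1 • (∑ i, p * c i) := by
          exact smul_le_smul_of_nonneg_right hcard hPnn
      _ = ∑ i, p * c i := one_smul _ _
  rw [step3]
  linarith

end Transport

/-- **GPA guarantee when the hub is exhausted.** Fix `τ ∈ (0,1]` and thresholds
with `γ i ≤ min{1, τ·p·c_i/w_i}` (interpreted as `1` when `w i = 0`). If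
`s^end = 0`, then for every feasible offline allocation `ℓ*`,
`cost(ℓ) ≤ (1 + τ)·cost(ℓ*) + Σ_i 3p(b_i + c_i)`. -/
theorem gpa_guarantee_exhausted
    (n T : ℕ) (c b : Fin n → ℕ) (hc : ∀ i, 1 ≤ c i)
    (w : Fin n → ℝ) (hw : ∀ i, 0 ≤ w i)
    (p : ℝ) (hp : 0 ≤ p) (hwp : ∀ i, w i ≤ p * c i)
    (s : ℕ) (d : Fin n → ℕ → ℕ) (hd : ∀ i, ∀ t ∈ Icc 1 T, d i t ≤ b i)
    (τ : ℝ) (hτ0 : 0 < τ) (hτ1 : τ ≤ 1)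
    (γ : Fin n → ℝ) (hγ : ∀ i, 0 ≤ γ i ∧ γ i ≤ 1)
    (hγub : ∀ i, γ i ≤ (if w i = 0 then (1 : ℝ) else min 1 (τ * p * c i / w i)))
    (ℓ : Fin n → ℕ → ℝ) (hℓ : ℓ = fun i t => gpaAlloc b c γ d s i t)
    (hend : (∑ i, gpaL b c γ d s i T) = s)
    (ℓs : Fin n → ℕ → ℝ) (hℓs : ∀ i, ∀ t ∈ Icc 1 T, 0 ≤ ℓs i t)
    (hfeas : ∑ i, ∑ t ∈ Icc 1 T, ℓs i t ≤ (s : ℝ))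
    :
    totalCost T w c b p d ℓ
      ≤ (1 + τ) * totalCost T w c b p d ℓs
        + ∑ i, 3 * p * ((b i : ℝ) + c i) := by
  subst hℓ
  -- abbreviations (plain `have`-style, via lambdas)
  have hLs_nonneg : ∀ i, 0 ≤ ∑ t ∈ Icc 1 T, ℓs i t := fun i =>
    Finset.sum_nonneg (fun t ht => hℓs i t ht)
  have hDi_nonneg : ∀ i, 0 ≤ ∑ t ∈ Icc 1 T, (d i t : ℝ) := fun i =>
    Finset.sum_nonneg (fun t _ => Nat.cast_nonneg _)
  have hlost_nonneg : ∀ i, 0 ≤ penaltyCost T 1 (b i) (d i) (ℓs i) := fun i =>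
    penalty_nonneg T 1 zero_le_one (b i) (d i) (ℓs i)
  have hSst_nonneg : ∀ i, 0 ≤ stock (b i) (d i) (ℓs i) T := fun i =>
    stock_nonneg T (b i) (d i) (ℓs i) (hℓs i) T le_rfl
  have hlost_eq : ∀ i, penaltyCost T 1 (b i) (d i) (ℓs i)
      = (∑ t ∈ Icc 1 T, (d i t : ℝ)) - b i + stock (b i) (d i) (ℓs i) T
        - ∑ t ∈ Icc 1 T, ℓs i t := by
    intro i
    rw [penalty_eq, one_mul]
  have hPNs : ∀ i, penaltyCost T p (b i) (d i) (ℓs i)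
      = p * penaltyCost T 1 (b i) (d i) (ℓs i) := by
    intro i
    rw [penalty_eq, hlost_eq i]
  have hPNG : ∀ i, penaltyCost T p (b i) (d i) (gpaAlloc b c γ d s i)
      = p * ((∑ t ∈ Icc 1 T, (d i t : ℝ)) - b i
          + stock (b i) (d i) (gpaAlloc b c γ d s i) T - (gpaL b c γ d s i T : ℝ)) := by
    intro i
    rw [penalty_eq, gpa_alloc_telescope]
  have hGle : ∀ i, stock (b i) (d i) (gpaAlloc b c γ d s i) T ≤ (b i : ℝ) + c i := by
    intro i
    rw [gpa_stock_eq]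
    have h1 : (gpaState b c γ d s T).2.1 i ≤ b i + c i :=
      le_trans (gpa_stock_le b c γ d s i (hc i) T) (Nat.sub_le _ _)
    exact_mod_cast h1
  have hcpos : ∀ i, (0:ℝ) < c i := fun i => by
    exact_mod_cast Nat.lt_of_lt_of_le Nat.zero_lt_one (hc i)
  have hWp : ∀ i, w i / c i ≤ p := fun i =>
    (div_le_iff₀ (hcpos i)).2 (hwp i)
  have hW_nonneg : ∀ i, 0 ≤ w i / c i := fun i =>
    div_nonneg (hw i) (le_of_lt (hcpos i))
  have hDile : ∀ i, (∑ t ∈ Icc 1 T, (d i t : ℝ))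
      ≤ (b i : ℝ) + (∑ t ∈ Icc 1 T, ℓs i t) + penaltyCost T 1 (b i) (d i) (ℓs i) := by
    intro i
    have h1 := hlost_eq i
    have h2 := hSst_nonneg i
    linarith
  -- per-site transport key inequality
  have hkey : ∀ i, (w i / c i) * (gpaL b c γ d s i T : ℝ)
      ≤ transportCost T (w i) (c i) (ℓs i)
        + τ * (p * penaltyCost T 1 (b i) (d i) (ℓs i)) + p * b i
        + p * ((b i : ℝ) + c i) := by
    intro i
    have hγ0 := (hγ i).1
    have hγ1 := (hγ i).2
    have hLiB : (gpaL b c γ d s i T : ℝ)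
        ≤ γ i * (∑ t ∈ Icc 1 T, (d i t : ℝ)) + b i + c i :=
      gpa_L_le b c γ d s i hγ0 (hc i) T
    have hγW : 0 ≤ γ i * (w i / c i) := mul_nonneg hγ0 (hW_nonneg i)
    have htr : (w i / c i) * (∑ t ∈ Icc 1 T, ℓs i t)
        ≤ transportCost T (w i) (c i) (ℓs i) :=
      transport_ge T (w i) (hw i) (c i) (ℓs i)
    have hτlost : γ i * (w i / c i) * penaltyCost T 1 (b i) (d i) (ℓs i)
        ≤ τ * (p * penaltyCost T 1 (b i) (d i) (ℓs i)) := by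
      rcases eq_or_ne (w i) 0 with hw0 | hw0
      · rw [hw0]
        simp only [zero_div, mul_zero, zero_mul]
        have := hlost_nonneg i
        positivity
      · have hwpos : 0 < w i := lt_of_le_of_ne (hw i) (Ne.symm hw0)
        have hub := hγub i
        rw [if_neg hw0] at hub
        have hub2 : γ i ≤ τ * p * c i / w i := le_trans hub (min_le_right _ _)
        have h3 : γ i * w i ≤ τ * p * c i := by
          have := mul_le_mul_of_nonneg_right hub2 (le_of_lt hwpos)
          rwa [div_mul_cancel₀ _ (ne_of_gt hwpos)] at this
        have h4 : γ i * (w i / c i) ≤ τ * p := by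
          have hrw : γ i * (w i / c i) = (γ i * w i) / c i := by ring
          rw [hrw, div_le_iff₀ (hcpos i)]
          linarith [h3]
        calc γ i * (w i / c i) * penaltyCost T 1 (b i) (d i) (ℓs i)
            ≤ (τ * p) * penaltyCost T 1 (b i) (d i) (ℓs i) :=
              mul_le_mul_of_nonneg_right h4 (hlost_nonneg i)
          _ = τ * (p * penaltyCost T 1 (b i) (d i) (ℓs i)) := by ring
    have hγWb : γ i * (w i / c i) * (b i : ℝ) ≤ p * b i := by
      have h5 : γ i * (w i / c i) ≤ p := by
        calc γ i * (w i / c i) ≤ 1 * (w i / c i) :=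
              mul_le_mul_of_nonneg_right hγ1 (hW_nonneg i)
          _ = w i / c i := one_mul _
          _ ≤ p := hWp i
      exact mul_le_mul_of_nonneg_right h5 (Nat.cast_nonneg _)
    have hγWLs : γ i * ((w i / c i) * (∑ t ∈ Icc 1 T, ℓs i t))
        ≤ (w i / c i) * (∑ t ∈ Icc 1 T, ℓs i t) := by
      have h6 : 0 ≤ (w i / c i) * (∑ t ∈ Icc 1 T, ℓs i t) :=
        mul_nonneg (hW_nonneg i) (hLs_nonneg i)
      calc γ i * ((w i / c i) * (∑ t ∈ Icc 1 T, ℓs i t))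
          ≤ 1 * ((w i / c i) * (∑ t ∈ Icc 1 T, ℓs i t)) :=
            mul_le_mul_of_nonneg_right hγ1 h6
        _ = (w i / c i) * (∑ t ∈ Icc 1 T, ℓs i t) := one_mul _
    have e1 : (w i / c i) * (gpaL b c γ d s i T : ℝ)
        ≤ (w i / c i) * (γ i * (∑ t ∈ Icc 1 T, (d i t : ℝ)) + b i + c i) :=
      mul_le_mul_of_nonneg_left hLiB (hW_nonneg i)
    have e2 : γ i * (w i / c i) * (∑ t ∈ Icc 1 T, (d i t : ℝ))
        ≤ γ i * (w i / c i) * ((b i : ℝ) + (∑ t ∈ Icc 1 T, ℓs i t)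
            + penaltyCost T 1 (b i) (d i) (ℓs i)) :=
      mul_le_mul_of_nonneg_left (hDile i) hγW
    have e3 : (w i / c i) * ((b i : ℝ) + c i) ≤ p * ((b i : ℝ) + c i) := by
      have hbc : (0:ℝ) ≤ (b i : ℝ) + c i := by positivity
      exact mul_le_mul_of_nonneg_right (hWp i) hbc
    have heq1 : (w i / c i) * (γ i * (∑ t ∈ Icc 1 T, (d i t : ℝ)) + b i + c i)
        = γ i * (w i / c i) * (∑ t ∈ Icc 1 T, (d i t : ℝ))
          + (w i / c i) * ((b i : ℝ) + c i) := by ring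
    have heq2 : γ i * (w i / c i) * ((b i : ℝ) + (∑ t ∈ Icc 1 T, ℓs i t)
          + penaltyCost T 1 (b i) (d i) (ℓs i))
        = γ i * (w i / c i) * (b i : ℝ)
          + γ i * ((w i / c i) * (∑ t ∈ Icc 1 T, ℓs i t))
          + γ i * (w i / c i) * penaltyCost T 1 (b i) (d i) (ℓs i) := by ring
    rw [heq1] at e1
    rw [heq2] at e2
    linarith [e1, e2, e3, htr, hτlost, hγWb, hγWLs]
  -- total transport bound
  have hTR : ∑ i, transportCost T (w i) (c i) (gpaAlloc b c γ d s i)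
      ≤ ∑ i, transportCost T (w i) (c i) (ℓs i)
        + τ * ∑ i, penaltyCost T p (b i) (d i) (ℓs i)
        + ∑ i, (p * b i + p * ((b i : ℝ) + c i) + p * c i) := by
    have h1 := gpa_transport_total b c γ d s w p hc hw hp hwp T
    have h2 : ∑ i, (w i / c i) * (gpaL b c γ d s i T : ℝ)
        ≤ ∑ i, (transportCost T (w i) (c i) (ℓs i)
            + τ * (p * penaltyCost T 1 (b i) (d i) (ℓs i)) + p * b i
            + p * ((b i : ℝ) + c i)) :=
      Finset.sum_le_sum (fun i _ => hkey i)
    rw [Finset.sum_add_distrib, Finset.sum_add_distrib, Finset.sum_add_distrib] at h2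
    have h3 : ∑ i, τ * (p * penaltyCost T 1 (b i) (d i) (ℓs i))
        = τ * ∑ i, penaltyCost T p (b i) (d i) (ℓs i) := by
      rw [Finset.mul_sum]
      exact Finset.sum_congr rfl (fun i _ => by rw [hPNs i])
    rw [h3] at h2
    have h4 : ∑ i, (p * b i + p * ((b i : ℝ) + c i) + p * c i)
        = ∑ i, (p * (b i:ℝ) + p * ((b i : ℝ) + c i)) + ∑ i, p * (c i:ℝ) := by
      rw [← Finset.sum_add_distrib]
    rw [h4, Finset.sum_add_distrib]
    calc ∑ i, transportCost T (w i) (c i) (gpaAlloc b c γ d s i)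
        ≤ ∑ i, (w i / c i) * (gpaL b c γ d s i T : ℝ) + ∑ i, p * (c i:ℝ) := h1
      _ ≤ _ := by linarith
  -- total penalty bound
  have hPN : ∑ i, penaltyCost T p (b i) (d i) (gpaAlloc b c γ d s i)
      ≤ ∑ i, penaltyCost T p (b i) (d i) (ℓs i) + ∑ i, p * ((b i : ℝ) + c i) := by
    have hLisum : ∑ i, (gpaL b c γ d s i T : ℝ) = (s : ℝ) := by
      rw [← Nat.cast_sum, hend]
    have hstep : ∑ i, ((∑ t ∈ Icc 1 T, (d i t : ℝ)) - b i
          + stock (b i) (d i) (gpaAlloc b c γ d s i) T - (gpaL b c γ d s i T : ℝ))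
        ≤ ∑ i, ((∑ t ∈ Icc 1 T, (d i t : ℝ)) - b i
          + stock (b i) (d i) (ℓs i) T - ∑ t ∈ Icc 1 T, ℓs i t)
          + ∑ i, ((b i : ℝ) + c i) := by
      have g1 := Finset.sum_le_sum (fun i (_ : i ∈ Finset.univ) => hGle i)
      have g4 : (0:ℝ) ≤ ∑ i, stock (b i) (d i) (ℓs i) T :=
        Finset.sum_nonneg (fun i _ => hSst_nonneg i)
      have g5 : ∑ i, ∑ t ∈ Icc 1 T, ℓs i t ≤ (s:ℝ) := hfeas
      rw [Finset.sum_sub_distrib, Finset.sum_add_distrib, Finset.sum_sub_distrib]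
      rw [Finset.sum_sub_distrib, Finset.sum_add_distrib, Finset.sum_sub_distrib]
      rw [hLisum]
      linarith
    calc ∑ i, penaltyCost T p (b i) (d i) (gpaAlloc b c γ d s i)
        = p * ∑ i, ((∑ t ∈ Icc 1 T, (d i t : ℝ)) - b i
            + stock (b i) (d i) (gpaAlloc b c γ d s i) T - (gpaL b c γ d s i T : ℝ)) := by
          rw [Finset.mul_sum]
          exact Finset.sum_congr rfl (fun i _ => hPNG i)
      _ ≤ p * (∑ i, ((∑ t ∈ Icc 1 T, (d i t : ℝ)) - b i
            + stock (b i) (d i) (ℓs i) T - ∑ t ∈ Icc 1 T, ℓs i t)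
            + ∑ i, ((b i : ℝ) + c i)) :=
          mul_le_mul_of_nonneg_left hstep hp
      _ = ∑ i, p * ((∑ t ∈ Icc 1 T, (d i t : ℝ)) - b i
            + stock (b i) (d i) (ℓs i) T - ∑ t ∈ Icc 1 T, ℓs i t)
            + ∑ i, p * ((b i : ℝ) + c i) := by
          rw [mul_add, Finset.mul_sum, Finset.mul_sum]
      _ ≤ _ := by
          refine add_le_add_left (le_of_eq (Finset.sum_congr rfl (fun i _ => ?_))) _
          exact (penalty_eq T p (b i) (d i) (ℓs i)).symm
  -- assemble
  have hTotG : totalCost T w c b p d (fun i t => gpaAlloc b c γ d s i t)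
      = ∑ i, transportCost T (w i) (c i) (gpaAlloc b c γ d s i)
        + ∑ i, penaltyCost T p (b i) (d i) (gpaAlloc b c γ d s i) := by
    simp only [totalCost, Finset.sum_add_distrib]
  have hTotS : totalCost T w c b p d ℓs
      = ∑ i, transportCost T (w i) (c i) (ℓs i)
        + ∑ i, penaltyCost T p (b i) (d i) (ℓs i) := by
    simp only [totalCost, Finset.sum_add_distrib]
  have hTPs_nonneg : 0 ≤ ∑ i, transportCost T (w i) (c i) (ℓs i) :=
    Finset.sum_nonneg (fun i _ => transport_nonneg T (w i) (hw i) (c i) (ℓs i) (hℓs i))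
  have hτTP : 0 ≤ τ * ∑ i, transportCost T (w i) (c i) (ℓs i) :=
    mul_nonneg hτ0.le hTPs_nonneg
  have hsum : ∑ i, (p * b i + p * ((b i : ℝ) + c i) + p * c i)
      + ∑ i, p * ((b i : ℝ) + c i) = ∑ i, 3 * p * ((b i : ℝ) + c i) := by
    rw [← Finset.sum_add_distrib]
    exact Finset.sum_congr rfl (fun i _ => by ring)
  have hexp : (1 + τ) * totalCost T w c b p d ℓs
      = ∑ i, transportCost T (w i) (c i) (ℓs i)
        + ∑ i, penaltyCost T p (b i) (d i) (ℓs i)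
        + τ * ∑ i, transportCost T (w i) (c i) (ℓs i)
        + τ * ∑ i, penaltyCost T p (b i) (d i) (ℓs i) := by
    rw [hTotS]
    ring
  rw [hTotG, hexp]
  linarith
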